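/- Fix μ0, μ1 > 0 and real numbers d0, d1, and define H(ω) := e^{−ω}·(ω − μ0·(ω² + d0))·(ω − μ1·(ω² + d1)) − e^{ω}·(ω + μ0·(ω² + d0))·(ω + μ1·(ω² + d1)). For every ω > 0, the boundary value problem X''(x) = ω²·X(x) on [0,1], X'(0) = μ0·(ω² + d0)·X(0), X'(1) = −μ1·(ω² + d1)·X(1) admits a solution X ∈ C²([0,1],ℝ) that is not identically zero if and only if H(ω) = 0. -/

import Mathlib

open Real Set

/-- For ω > 0, the BVP X'' = ω²X on [0,1] with
X'(0) = μ0(ω²+d0)X(0), X'(1) = -μ1(ω²+d1)X(1) has a nontrivial C² solution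
iff H(ω) = 0. -/
theorem positive_eigenvalue_characteristic_equation
    (μ0 μ1 d0 d1 : ℝ) (hμ0 : 0 < μ0) (hμ1 : 0 < μ1) (ω : ℝ) (hω : 0 < ω) :
    (∃ X : ℝ → ℝ, ContDiff ℝ 2 X ∧
        (∀ x ∈ Icc (0:ℝ) 1, deriv (deriv X) x = ω^2 * X x) ∧
        deriv X 0 = μ0 * (ω^2 + d0) * X 0 ∧
        deriv X 1 = -μ1 * (ω^2 + d1) * X 1 ∧
        (∃ x ∈ Icc (0:ℝ) 1, X x ≠ 0)) ↔
      Real.exp (-ω) * (ω - μ0*(ω^2 + d0)) * (ω - μ1*(ω^2 + d1))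
        - Real.exp ω * (ω + μ0*(ω^2 + d0)) * (ω + μ1*(ω^2 + d1)) = 0 := by
  constructor
  · rintro ⟨X, hX, hode, hbc0, hbc1, x₀, hx₀, hXx₀⟩
    have hX11 : ContDiff ℝ (1+1) X := by norm_num at hX ⊢; exact hX
    have hX1 : Differentiable ℝ X := hX.differentiable (by norm_num)
    have hX2 : ContDiff ℝ 1 (deriv X) := (contDiff_succ_iff_deriv.mp hX11).2.2
    have hX2' : Differentiable ℝ (deriv X) := hX2.differentiable one_ne_zero
    set f0 : ℝ := deriv X 0 + ω * X 0 with hf0def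
    set g0 : ℝ := deriv X 0 - ω * X 0 with hg0def
    -- constancy of f and g
    have hderf : ∀ x ∈ Ico (0:ℝ) 1,
        HasDerivWithinAt (fun x => exp (-(ω*x)) * (deriv X x + ω * X x)) 0 (Ici x) x := by
      intro x hx
      have h0 : HasDerivAt (fun x : ℝ => -(ω*x)) (-ω) x := by
        exact (((hasDerivAt_id x).const_mul ω).neg).congr_deriv (by ring)
      have h1 : HasDerivAt (fun x : ℝ => exp (-(ω*x))) (exp (-(ω*x)) * (-ω)) x := h0.exp
      have h2 : HasDerivAt (fun x => deriv X x + ω * X x)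
          (deriv (deriv X) x + ω * deriv X x) x :=
        ((hX2' x).hasDerivAt).add (((hX1 x).hasDerivAt).const_mul ω)
      have h3 := h1.mul h2
      have hz : exp (-(ω*x)) * (-ω) * (deriv X x + ω * X x)
          + exp (-(ω*x)) * (deriv (deriv X) x + ω * deriv X x) = 0 := by
        rw [hode x (Ico_subset_Icc_self hx)]; ring
      exact hz ▸ h3.hasDerivWithinAt
    have hderg : ∀ x ∈ Ico (0:ℝ) 1,
        HasDerivWithinAt (fun x => exp (ω*x) * (deriv X x - ω * X x)) 0 (Ici x) x := by
      intro x hx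
      have h0 : HasDerivAt (fun x : ℝ => ω*x) ω x := by
        simpa using ((hasDerivAt_id x).const_mul ω)
      have h1 : HasDerivAt (fun x : ℝ => exp (ω*x)) (exp (ω*x) * ω) x := h0.exp
      have h2 : HasDerivAt (fun x => deriv X x - ω * X x)
          (deriv (deriv X) x - ω * deriv X x) x :=
        ((hX2' x).hasDerivAt).sub (((hX1 x).hasDerivAt).const_mul ω)
      have h3 := h1.mul h2
      have hz : exp (ω*x) * ω * (deriv X x - ω * X x)
          + exp (ω*x) * (deriv (deriv X) x - ω * deriv X x) = 0 := by
        rw [hode x (Ico_subset_Icc_self hx)]; ring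
      exact hz ▸ h3.hasDerivWithinAt
    have hcontf : ContinuousOn (fun x => exp (-(ω*x)) * (deriv X x + ω * X x)) (Icc (0:ℝ) 1) :=
      (((Real.continuous_exp.comp ((continuous_const.mul continuous_id).neg)).mul
        (hX2'.continuous.add (continuous_const.mul hX1.continuous)))).continuousOn
    have hcontg : ContinuousOn (fun x => exp (ω*x) * (deriv X x - ω * X x)) (Icc (0:ℝ) 1) :=
      (((Real.continuous_exp.comp (continuous_const.mul continuous_id)).mul
        (hX2'.continuous.sub (continuous_const.mul hX1.continuous)))).continuousOn
    have hfc : ∀ x ∈ Icc (0:ℝ) 1, exp (-(ω*x)) * (deriv X x + ω * X x) = f0 := by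
      intro x hx
      have := constant_of_has_deriv_right_zero hcontf hderf x hx
      simpa [hf0def] using this
    have hgc : ∀ x ∈ Icc (0:ℝ) 1, exp (ω*x) * (deriv X x - ω * X x) = g0 := by
      intro x hx
      have := constant_of_has_deriv_right_zero hcontg hderg x hx
      simpa [hg0def] using this
    -- key equations
    have hf1 : exp (-ω) * (deriv X 1 + ω * X 1) = f0 := by
      have := hfc 1 (by norm_num); simpa using this
    have hg1 : exp ω * (deriv X 1 - ω * X 1) = g0 := by
      have := hgc 1 (by norm_num); simpa using this
    have hAB : exp ω * exp (-ω) = 1 := by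
      rw [← Real.exp_add]; simp
    have e1 : f0 * (ω - μ0*(ω^2 + d0)) + g0 * (ω + μ0*(ω^2 + d0)) = 0 := by
      rw [hf0def, hg0def]; linear_combination (2*ω) * hbc0
    have hAf : exp ω * f0 = deriv X 1 + ω * X 1 := by
      rw [← hf1, ← mul_assoc, hAB, one_mul]
    have hBg : exp (-ω) * g0 = deriv X 1 - ω * X 1 := by
      rw [← hg1, ← mul_assoc, mul_comm (exp (-ω)) (exp ω), hAB, one_mul]
    have e2 : exp ω * f0 * (ω + μ1*(ω^2 + d1)) + exp (-ω) * g0 * (ω - μ1*(ω^2 + d1)) = 0 := by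
      linear_combination (ω + μ1*(ω^2 + d1)) * hAf + (ω - μ1*(ω^2 + d1)) * hBg + (2*ω) * hbc1
    -- nontriviality
    have hnt : f0 ≠ 0 ∨ g0 ≠ 0 := by
      by_contra h
      push_neg at h
      obtain ⟨hf, hg⟩ := h
      have h1 := hfc x₀ hx₀
      have h2 := hgc x₀ hx₀
      rw [hf] at h1; rw [hg] at h2
      have e1' : deriv X x₀ + ω * X x₀ = 0 :=
        (mul_eq_zero.mp h1).resolve_left (Real.exp_ne_zero _)
      have e2' : deriv X x₀ - ω * X x₀ = 0 :=
        (mul_eq_zero.mp h2).resolve_left (Real.exp_ne_zero _)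
      have : ω * X x₀ = 0 := by linarith
      exact hXx₀ (by
        rcases mul_eq_zero.mp this with h | h
        · exact absurd h (ne_of_gt hω)
        · exact h)
    have hHf : (exp (-ω) * (ω - μ0*(ω^2 + d0)) * (ω - μ1*(ω^2 + d1))
        - exp ω * (ω + μ0*(ω^2 + d0)) * (ω + μ1*(ω^2 + d1))) * f0 = 0 := by
      linear_combination (exp (-ω) * (ω - μ1*(ω^2 + d1))) * e1 - (ω + μ0*(ω^2 + d0)) * e2
    have hHg : (exp (-ω) * (ω - μ0*(ω^2 + d0)) * (ω - μ1*(ω^2 + d1))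
        - exp ω * (ω + μ0*(ω^2 + d0)) * (ω + μ1*(ω^2 + d1))) * g0 = 0 := by
      linear_combination (ω - μ0*(ω^2 + d0)) * e2 - (exp ω * (ω + μ1*(ω^2 + d1))) * e1
    rcases hnt with h | h
    · exact (mul_eq_zero.mp hHf).resolve_right h
    · exact (mul_eq_zero.mp hHg).resolve_right h
  · intro hH
    have h0 : ∀ x : ℝ, HasDerivAt (fun x : ℝ => ω*x) ω x := fun x => by
      simpa using ((hasDerivAt_id x).const_mul ω)
    have h1 : ∀ x : ℝ, HasDerivAt (fun x : ℝ => -(ω*x)) (-ω) x := fun x => (h0 x).neg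
    have hder : ∀ x : ℝ, HasDerivAt
        (fun x => (ω + μ0*(ω^2 + d0)) * exp (ω*x) + (ω - μ0*(ω^2 + d0)) * exp (-(ω*x)))
        (ω * ((ω + μ0*(ω^2 + d0)) * exp (ω*x) - (ω - μ0*(ω^2 + d0)) * exp (-(ω*x)))) x := by
      intro x
      have := ((h0 x).exp.const_mul (ω + μ0*(ω^2 + d0))).add
        ((h1 x).exp.const_mul (ω - μ0*(ω^2 + d0)))
      refine this.congr_deriv ?_
      ring
    have hd1 : deriv (fun x => (ω + μ0*(ω^2 + d0)) * exp (ω*x)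
          + (ω - μ0*(ω^2 + d0)) * exp (-(ω*x)))
        = fun x => ω * ((ω + μ0*(ω^2 + d0)) * exp (ω*x) - (ω - μ0*(ω^2 + d0)) * exp (-(ω*x))) :=
      funext fun x => (hder x).deriv
    refine ⟨fun x => (ω + μ0*(ω^2 + d0)) * exp (ω*x) + (ω - μ0*(ω^2 + d0)) * exp (-(ω*x)),
      ?_, ?_, ?_, ?_, ?_⟩
    · have h2 : ContDiff ℝ 2 (fun x : ℝ => ω * x) := contDiff_const.mul contDiff_id
      exact (contDiff_const.mul h2.exp).add (contDiff_const.mul h2.neg.exp)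
    · intro x _
      rw [hd1]
      have hder2 : HasDerivAt
          (fun x => ω * ((ω + μ0*(ω^2 + d0)) * exp (ω*x) - (ω - μ0*(ω^2 + d0)) * exp (-(ω*x))))
          (ω^2 * ((ω + μ0*(ω^2 + d0)) * exp (ω*x) + (ω - μ0*(ω^2 + d0)) * exp (-(ω*x)))) x := by
        have := (((h0 x).exp.const_mul (ω + μ0*(ω^2 + d0))).sub
          ((h1 x).exp.const_mul (ω - μ0*(ω^2 + d0)))).const_mul ω
        refine this.congr_deriv ?_
        ring
      exact hder2.deriv
    · rw [hd1]
      simp only [mul_zero, neg_zero, Real.exp_zero, mul_one]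
      ring
    · rw [hd1]
      simp only [mul_one]
      linear_combination -hH
    · refine ⟨0, by norm_num, ?_⟩
      simp only [mul_zero, neg_zero, Real.exp_zero, mul_one]
      intro h
      nlinarith
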